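/- V-trace is a contraction: Let β be a behavior policy with β(a|s) > 0 for all (s,a), and define the V-trace operator RV(s) = V(s) + E_{τ∼β}[ Σ_{t≥0} γ^t (c_0⋯c_{t−1}) ρ_t (r_t + γ V(s_{t+1}) − V(s_t)) | s_0 = s ] with truncated importance weights c_i = min(c̄, π(a_i|s_i)/β(a_i|s_i)), ρ_t = min(ρ̄, π(a_t|s_t)/β(a_t|s_t)), ρ̄ ≥ c̄ ≥ 0. If there exists α ∈ (0,1] with E_{a∼β(s)}[ρ_0] ≥ α for all s, then R is an η-contraction in sup-norm with η = γ^{−1} − (γ^{−1}−1) E_{τ∼β}[Σ_{t≥0} γ^t (Π_{i=0}^{t−2} c_i) ρ_{t−1}] ≤ 1 − (1−γ)α < 1, using the convention c_{−1} = ρ_{−1} = 1. -/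

import Mathlib

open Finset

noncomputable section

variable {S A : Type*} [Fintype S] [Fintype A] [DecidableEq S]

/-- A policy assigns a probability distribution over actions to each state. -/
def IsPolicy (p : S → A → ℝ) : Prop :=
  (∀ s a, 0 ≤ p s a) ∧ ∀ s, ∑ a, p s a = 1

/-- A finite Markov decision process with discount factor `γ ∈ [0,1)`. -/
structure FinMDP (S A : Type*) [Fintype S] [Fintype A] where
  P : S → A → S → ℝ
  P_nonneg : ∀ s a s', 0 ≤ P s a s'
  P_sum : ∀ s a, ∑ s', P s a s' = 1
  r : S → A → ℝ
  μ : S → ℝ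
  μ_nonneg : ∀ s, 0 ≤ μ s
  μ_sum : ∑ s, μ s = 1
  γ : ℝ
  γ_nonneg : 0 ≤ γ
  γ_lt_one : γ < 1

/-- One step of the state-distribution evolution under a policy. -/
def stepDist (M : FinMDP S A) (π : S → A → ℝ) (d : S → ℝ) : S → ℝ :=
  fun s' => ∑ s, ∑ a, d s * π s a * M.P s a s'

/-- Distribution of the state at time `t`, starting from `μ`, following `π`. -/
def stateDist (M : FinMDP S A) (π : S → A → ℝ) : ℕ → S → ℝ
  | 0 => M.μ
  | t + 1 => stepDist M π (stateDist M π t)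

/-- Expected discounted return `J(π)` with initial distribution `μ`. -/
def Jret (M : FinMDP S A) (π : S → A → ℝ) : ℝ :=
  ∑' t : ℕ, M.γ ^ t * ∑ s, stateDist M π t s * ∑ a, π s a * M.r s a

/-- Discounted future state visitation distribution `d^π`. -/
def dVisit (M : FinMDP S A) (π : S → A → ℝ) (s : S) : ℝ :=
  (1 - M.γ) * ∑' t : ℕ, M.γ ^ t * stateDist M π t s

/-- Distribution of the state at time `t` starting deterministically from `s₀`. -/
def stateDistFrom (M : FinMDP S A) (π : S → A → ℝ) (s₀ : S) : ℕ → S → ℝ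
  | 0 => fun s => if s = s₀ then 1 else 0
  | t + 1 => stepDist M π (stateDistFrom M π s₀ t)

/-- State value function `V_π(s₀)`: expected discounted return starting from `s₀`. -/
def Vval (M : FinMDP S A) (π : S → A → ℝ) (s₀ : S) : ℝ :=
  ∑' t : ℕ, M.γ ^ t * ∑ s, stateDistFrom M π s₀ t s * ∑ a, π s a * M.r s a

/-- State-action value function `Q_π(s,a)`. -/
def Qval (M : FinMDP S A) (π : S → A → ℝ) (s : S) (a : A) : ℝ :=
  M.r s a + M.γ * ∑ s', M.P s a s' * Vval M π s'

/-- Advantage function `A_π(s,a) = Q_π(s,a) - V_π(s)`. -/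
def Adv (M : FinMDP S A) (π : S → A → ℝ) (s : S) (a : A) : ℝ :=
  Qval M π s a - Vval M π s

/-- Total variation distance between two distributions over actions. -/
def DTV (p q : A → ℝ) : ℝ := (1 / 2) * ∑ a, |p a - q a|

/-- KL divergence between two distributions over actions. -/
def DKL (p q : A → ℝ) : ℝ := ∑ a, p a * Real.log (p a / q a)

/-- Truncated importance weight `c_i = min(c̄, π(a|s)/β(a|s))`. -/
def cw (π β : S → A → ℝ) (cbar : ℝ) (s : S) (a : A) : ℝ := min cbar (π s a / β s a)

/-- Truncated importance weight `ρ_t = min(ρ̄, π(a|s)/β(a|s))`. -/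
def ρw (π β : S → A → ℝ) (ρbar : ℝ) (s : S) (a : A) : ℝ := min ρbar (π s a / β s a)

/-- `E_{τ∼β}[(c₀⋯c_{t−1}) ρ_t (r_t + γ V(s_{t+1}) − V(s_t)) | s₀ = s]`. -/
def vtraceTerm (M : FinMDP S A) (π β : S → A → ℝ) (cbar ρbar : ℝ) (V : S → ℝ) :
    ℕ → S → ℝ
  | 0, s => ∑ a, β s a * ρw π β ρbar s a *
      (M.r s a + M.γ * (∑ s', M.P s a s' * V s') - V s)
  | t + 1, s => ∑ a, β s a * cw π β cbar s a *
      ∑ s', M.P s a s' * vtraceTerm M π β cbar ρbar V t s'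

/-- The V-trace operator `R V (s) = V(s) + ∑_t γ^t E[(c₀⋯c_{t−1}) ρ_t δ_t V]`. -/
def vtraceOp (M : FinMDP S A) (π β : S → A → ℝ) (cbar ρbar : ℝ) (V : S → ℝ) : S → ℝ :=
  fun s => V s + ∑' t : ℕ, M.γ ^ t * vtraceTerm M π β cbar ρbar V t s

/-- `E_{τ∼β}[(∏_{i=0}^{t−2} c_i) ρ_{t−1} | s₀ = s]`, with the convention `c₋₁ = ρ₋₁ = 1`. -/
def etaW (M : FinMDP S A) (π β : S → A → ℝ) (cbar ρbar : ℝ) : ℕ → S → ℝ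
  | 0, _ => 1
  | 1, s => ∑ a, β s a * ρw π β ρbar s a
  | t + 2, s => ∑ a, β s a * cw π β cbar s a *
      ∑ s', M.P s a s' * etaW M π β cbar ρbar (t + 1) s'


section VtraceAux

variable {π β : S → A → ℝ} {cbar ρbar : ℝ}

private lemma abs_sum_mul_le {ι : Type*} [Fintype ι] {c f g : ι → ℝ}
    (hc : ∀ i, 0 ≤ c i) (h : ∀ i, |f i| ≤ g i) :
    |∑ i, c i * f i| ≤ ∑ i, c i * g i := by
  calc |∑ i, c i * f i| ≤ ∑ i, |c i * f i| := Finset.abs_sum_le_sum_abs _ _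
    _ ≤ ∑ i, c i * g i := by
      refine Finset.sum_le_sum fun i _ => ?_
      rw [abs_mul, abs_of_nonneg (hc i)]
      exact mul_le_mul_of_nonneg_left (h i) (hc i)

private lemma rw_nonneg (hπ : IsPolicy π) (hβpos : ∀ s a, 0 < β s a) (hρ : 0 ≤ ρbar)
    (s : S) (a : A) : 0 ≤ ρw π β ρbar s a :=
  le_min hρ (div_nonneg (hπ.1 s a) (hβpos s a).le)

private lemma cww_nonneg (hπ : IsPolicy π) (hβpos : ∀ s a, 0 < β s a) (hc : 0 ≤ cbar)
    (s : S) (a : A) : 0 ≤ cw π β cbar s a :=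
  le_min hc (div_nonneg (hπ.1 s a) (hβpos s a).le)

private lemma cw_le_rw (hcρ : cbar ≤ ρbar) (s : S) (a : A) :
    cw π β cbar s a ≤ ρw π β ρbar s a :=
  min_le_min hcρ le_rfl

private lemma sum_beta_rw_le_one (hπ : IsPolicy π) (hβ : IsPolicy β)
    (hβpos : ∀ s a, 0 < β s a) (s : S) :
    ∑ a, β s a * ρw π β ρbar s a ≤ 1 := by
  have key : ∀ a : A, β s a * ρw π β ρbar s a ≤ π s a := by
    intro a
    calc β s a * ρw π β ρbar s a ≤ β s a * (π s a / β s a) :=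
          mul_le_mul_of_nonneg_left (min_le_right _ _) (hβ.1 s a)
      _ = π s a := by rw [mul_comm, div_mul_cancel₀ _ (ne_of_gt (hβpos s a))]
  calc ∑ a, β s a * ρw π β ρbar s a ≤ ∑ a, π s a := Finset.sum_le_sum fun a _ => key a
    _ = 1 := hπ.2 s

private lemma sum_beta_cw_le_one (hπ : IsPolicy π) (hβ : IsPolicy β)
    (hβpos : ∀ s a, 0 < β s a) (hcρ : cbar ≤ ρbar) (s : S) :
    ∑ a, β s a * cw π β cbar s a ≤ 1 :=
  le_trans (Finset.sum_le_sum fun a _ =>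
      mul_le_mul_of_nonneg_left (cw_le_rw hcρ s a) (hβ.1 s a))
    (sum_beta_rw_le_one hπ hβ hβpos s)

variable {M : FinMDP S A}

private lemma etaW_zero_eq (s : S) : etaW M π β cbar ρbar 0 s = 1 := rfl

private lemma etaW_one_eq (s : S) :
    etaW M π β cbar ρbar 1 s = ∑ a, β s a * ρw π β ρbar s a := rfl

private lemma etaW_add_two_eq (t : ℕ) (s : S) :
    etaW M π β cbar ρbar (t + 2) s = ∑ a, β s a * cw π β cbar s a *
      ∑ s', M.P s a s' * etaW M π β cbar ρbar (t + 1) s' := rfl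

private lemma etaW_nonneg (hπ : IsPolicy π) (hβ : IsPolicy β) (hβpos : ∀ s a, 0 < β s a)
    (hc : 0 ≤ cbar) (hcρ : cbar ≤ ρbar) :
    ∀ t s, 0 ≤ etaW M π β cbar ρbar t s := by
  have hρ : (0:ℝ) ≤ ρbar := le_trans hc hcρ
  intro t
  induction t with
  | zero => intro s; rw [etaW_zero_eq]; norm_num
  | succ n ih =>
    cases n with
    | zero =>
      intro s
      rw [etaW_one_eq]
      exact Finset.sum_nonneg fun a _ => mul_nonneg (hβ.1 s a) (rw_nonneg hπ hβpos hρ s a)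
    | succ m =>
      intro s
      rw [show m + 1 + 1 = m + 2 from rfl, etaW_add_two_eq]
      refine Finset.sum_nonneg fun a _ =>
        mul_nonneg (mul_nonneg (hβ.1 s a) (cww_nonneg hπ hβpos hc s a)) ?_
      exact Finset.sum_nonneg fun s' _ => mul_nonneg (M.P_nonneg s a s') (ih s')

private lemma etaW_succ_le (hπ : IsPolicy π) (hβ : IsPolicy β) (hβpos : ∀ s a, 0 < β s a)
    (hc : 0 ≤ cbar) (hcρ : cbar ≤ ρbar) :
    ∀ t s, etaW M π β cbar ρbar (t + 1) s ≤ etaW M π β cbar ρbar t s := by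
  intro t
  induction t with
  | zero =>
    intro s
    rw [show (0:ℕ) + 1 = 1 from rfl, etaW_one_eq, etaW_zero_eq]
    exact sum_beta_rw_le_one hπ hβ hβpos s
  | succ n ih =>
    cases n with
    | zero =>
      intro s
      rw [show (0:ℕ) + 1 + 1 = 0 + 2 from rfl, etaW_add_two_eq,
        show (0:ℕ) + 1 = 1 from rfl, etaW_one_eq]
      refine Finset.sum_le_sum fun a _ => ?_
      have h1 : ∑ s', M.P s a s' * etaW M π β cbar ρbar 1 s' ≤ 1 := by
        calc ∑ s', M.P s a s' * etaW M π β cbar ρbar 1 s'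
            ≤ ∑ s', M.P s a s' * 1 := by
              refine Finset.sum_le_sum fun s' _ => ?_
              rw [etaW_one_eq]
              exact mul_le_mul_of_nonneg_left (sum_beta_rw_le_one hπ hβ hβpos s')
                (M.P_nonneg s a s')
          _ = 1 := by simp [M.P_sum s a]
      calc β s a * cw π β cbar s a * ∑ s', M.P s a s' * etaW M π β cbar ρbar 1 s'
          ≤ β s a * cw π β cbar s a * 1 :=
            mul_le_mul_of_nonneg_left h1 (mul_nonneg (hβ.1 s a) (cww_nonneg hπ hβpos hc s a))
        _ = β s a * cw π β cbar s a := mul_one _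
        _ ≤ β s a * ρw π β ρbar s a :=
            mul_le_mul_of_nonneg_left (cw_le_rw hcρ s a) (hβ.1 s a)
    | succ m =>
      intro s
      rw [show m + 1 + 1 + 1 = (m + 1) + 2 from rfl, show m + 1 + 1 = m + 2 from rfl,
        etaW_add_two_eq, etaW_add_two_eq, show m + 1 + 1 = m + 2 from rfl]
      refine Finset.sum_le_sum fun a _ => ?_
      refine mul_le_mul_of_nonneg_left ?_
        (mul_nonneg (hβ.1 s a) (cww_nonneg hπ hβpos hc s a))
      refine Finset.sum_le_sum fun s' _ => ?_
      have := ih s'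
      rw [show m + 1 + 1 = m + 2 from rfl] at this
      exact mul_le_mul_of_nonneg_left this (M.P_nonneg s a s')

private lemma etaW_le_one (hπ : IsPolicy π) (hβ : IsPolicy β) (hβpos : ∀ s a, 0 < β s a)
    (hc : 0 ≤ cbar) (hcρ : cbar ≤ ρbar) :
    ∀ t s, etaW M π β cbar ρbar t s ≤ 1 := by
  intro t
  induction t with
  | zero => intro s; rw [etaW_zero_eq]
  | succ n ih => intro s; exact le_trans (etaW_succ_le hπ hβ hβpos hc hcρ n s) (ih s)

private lemma inner_abs_le {W : S → ℝ} {K : ℝ} (hK : ∀ s', |W s'| ≤ K) (s : S) (a : A) :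
    |∑ s', M.P s a s' * W s'| ≤ K := by
  calc |∑ s', M.P s a s' * W s'| ≤ ∑ s', M.P s a s' * K :=
        abs_sum_mul_le (fun s' => M.P_nonneg s a s') hK
    _ = K := by rw [← Finset.sum_mul, M.P_sum, one_mul]

private lemma outer_abs_le {K : ℝ} (hβ : IsPolicy β) (s : S) (coef : A → ℝ)
    (hcoef : ∀ a, 0 ≤ coef a) (hsum : ∑ a, β s a * coef a ≤ 1)
    (f : A → ℝ) (hf : ∀ a, |f a| ≤ K) (hK0 : 0 ≤ K) :
    |∑ a, β s a * coef a * f a| ≤ K := by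
  calc |∑ a, β s a * coef a * f a| ≤ ∑ a, β s a * coef a * K :=
        abs_sum_mul_le (fun a => mul_nonneg (hβ.1 s a) (hcoef a)) hf
    _ = (∑ a, β s a * coef a) * K := (Finset.sum_mul _ _ _).symm
    _ ≤ 1 * K := mul_le_mul_of_nonneg_right hsum hK0
    _ = K := one_mul K

end VtraceAux

/-- Linearized expectation `E[(∏ c) ρ_t W(s_{t+1})]`. -/
def kfun (M : FinMDP S A) (π β : S → A → ℝ) (cbar ρbar : ℝ) (W : S → ℝ) : ℕ → S → ℝ
  | 0, s => ∑ a, β s a * ρw π β ρbar s a * ∑ s', M.P s a s' * W s'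
  | t + 1, s => ∑ a, β s a * cw π β cbar s a *
      ∑ s', M.P s a s' * kfun M π β cbar ρbar W t s'

/-- Linearized expectation `E[(∏ c) ρ_t W(s_t)]`. -/
def hfun (M : FinMDP S A) (π β : S → A → ℝ) (cbar ρbar : ℝ) (W : S → ℝ) : ℕ → S → ℝ
  | 0, s => (∑ a, β s a * ρw π β ρbar s a) * W s
  | t + 1, s => ∑ a, β s a * cw π β cbar s a *
      ∑ s', M.P s a s' * hfun M π β cbar ρbar W t s'

section VtraceAux2

variable {M : FinMDP S A} {π β : S → A → ℝ} {cbar ρbar : ℝ}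

private lemma summable_geom_bound (M : FinMDP S A) {f : ℕ → ℝ} {b : ℝ}
    (hf : ∀ t, |f t| ≤ b) : Summable (fun t : ℕ => M.γ ^ t * f t) := by
  refine Summable.of_norm_bounded
    ((summable_geometric_of_lt_one M.γ_nonneg M.γ_lt_one).mul_right b) fun t => ?_
  rw [Real.norm_eq_abs, abs_mul, abs_pow, abs_of_nonneg M.γ_nonneg]
  exact mul_le_mul_of_nonneg_left (hf t) (pow_nonneg M.γ_nonneg t)

private lemma vtraceTerm_sub (V₁ V₂ W : S → ℝ) (hW : ∀ x, W x = V₁ x - V₂ x) :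
    ∀ t s, vtraceTerm M π β cbar ρbar V₁ t s - vtraceTerm M π β cbar ρbar V₂ t s =
      M.γ * kfun M π β cbar ρbar W t s - hfun M π β cbar ρbar W t s := by
  intro t
  induction t with
  | zero =>
    intro s
    show (∑ a, β s a * ρw π β ρbar s a *
        (M.r s a + M.γ * (∑ s', M.P s a s' * V₁ s') - V₁ s)) -
      (∑ a, β s a * ρw π β ρbar s a *
        (M.r s a + M.γ * (∑ s', M.P s a s' * V₂ s') - V₂ s)) =
      M.γ * (∑ a, β s a * ρw π β ρbar s a * ∑ s', M.P s a s' * W s') -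
      (∑ a, β s a * ρw π β ρbar s a) * W s
    have hR : M.γ * (∑ a, β s a * ρw π β ρbar s a * ∑ s', M.P s a s' * W s') -
        (∑ a, β s a * ρw π β ρbar s a) * W s =
        ∑ a, (M.γ * (β s a * ρw π β ρbar s a * ∑ s', M.P s a s' * W s') -
          β s a * ρw π β ρbar s a * W s) := by
      rw [Finset.mul_sum, Finset.sum_mul, ← Finset.sum_sub_distrib]
    rw [hR, ← Finset.sum_sub_distrib]
    refine Finset.sum_congr rfl fun a _ => ?_
    have h1 : ∑ s', M.P s a s' * W s' =
        (∑ s', M.P s a s' * V₁ s') - ∑ s', M.P s a s' * V₂ s' := by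
      rw [← Finset.sum_sub_distrib]
      exact Finset.sum_congr rfl fun s' _ => by rw [hW]; ring
    rw [h1, hW]
    ring
  | succ n ih =>
    intro s
    show (∑ a, β s a * cw π β cbar s a *
        ∑ s', M.P s a s' * vtraceTerm M π β cbar ρbar V₁ n s') -
      (∑ a, β s a * cw π β cbar s a *
        ∑ s', M.P s a s' * vtraceTerm M π β cbar ρbar V₂ n s') =
      M.γ * (∑ a, β s a * cw π β cbar s a * ∑ s', M.P s a s' * kfun M π β cbar ρbar W n s') -
      ∑ a, β s a * cw π β cbar s a * ∑ s', M.P s a s' * hfun M π β cbar ρbar W n s'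
    rw [Finset.mul_sum, ← Finset.sum_sub_distrib, ← Finset.sum_sub_distrib]
    refine Finset.sum_congr rfl fun a _ => ?_
    have h2 : (∑ s', M.P s a s' * vtraceTerm M π β cbar ρbar V₁ n s') -
        ∑ s', M.P s a s' * vtraceTerm M π β cbar ρbar V₂ n s' =
        M.γ * (∑ s', M.P s a s' * kfun M π β cbar ρbar W n s') -
        ∑ s', M.P s a s' * hfun M π β cbar ρbar W n s' := by
      rw [← Finset.sum_sub_distrib, Finset.mul_sum, ← Finset.sum_sub_distrib]
      refine Finset.sum_congr rfl fun s' _ => ?_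
      have h3 := ih s'
      linear_combination M.P s a s' * h3
    linear_combination (β s a * cw π β cbar s a) * h2

private lemma kfun_abs_le [Nonempty S] (hπ : IsPolicy π) (hβ : IsPolicy β)
    (hβpos : ∀ s a, 0 < β s a) (hc : 0 ≤ cbar) (hcρ : cbar ≤ ρbar)
    {W : S → ℝ} {K : ℝ} (hK : ∀ x, |W x| ≤ K) (hK0 : 0 ≤ K) :
    ∀ t s, |kfun M π β cbar ρbar W t s| ≤ K := by
  have hρ : (0:ℝ) ≤ ρbar := le_trans hc hcρ
  intro t
  induction t with
  | zero =>
    intro s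
    exact outer_abs_le hβ s _ (rw_nonneg hπ hβpos hρ s)
      (sum_beta_rw_le_one hπ hβ hβpos s) _ (fun a => inner_abs_le hK s a) hK0
  | succ n ih =>
    intro s
    exact outer_abs_le hβ s _ (cww_nonneg hπ hβpos hc s)
      (sum_beta_cw_le_one hπ hβ hβpos hcρ s) _ (fun a => inner_abs_le ih s a) hK0

private lemma hfun_abs_le [Nonempty S] (hπ : IsPolicy π) (hβ : IsPolicy β)
    (hβpos : ∀ s a, 0 < β s a) (hc : 0 ≤ cbar) (hcρ : cbar ≤ ρbar)
    {W : S → ℝ} {K : ℝ} (hK : ∀ x, |W x| ≤ K) (hK0 : 0 ≤ K) :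
    ∀ t s, |hfun M π β cbar ρbar W t s| ≤ K := by
  have hρ : (0:ℝ) ≤ ρbar := le_trans hc hcρ
  intro t
  induction t with
  | zero =>
    intro s
    show |(∑ a, β s a * ρw π β ρbar s a) * W s| ≤ K
    rw [abs_mul, abs_of_nonneg (Finset.sum_nonneg fun a _ =>
      mul_nonneg (hβ.1 s a) (rw_nonneg hπ hβpos hρ s a))]
    calc (∑ a, β s a * ρw π β ρbar s a) * |W s| ≤ 1 * K :=
          mul_le_mul (sum_beta_rw_le_one hπ hβ hβpos s) (hK s) (abs_nonneg _) zero_le_one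
      _ = K := one_mul K
  | succ n ih =>
    intro s
    exact outer_abs_le hβ s _ (cww_nonneg hπ hβpos hc s)
      (sum_beta_cw_le_one hπ hβ hβpos hcρ s) _ (fun a => inner_abs_le ih s a) hK0

private lemma summable_vtrace [Nonempty S] (hπ : IsPolicy π) (hβ : IsPolicy β)
    (hβpos : ∀ s a, 0 < β s a) (hc : 0 ≤ cbar) (hcρ : cbar ≤ ρbar) (V : S → ℝ) (s : S) :
    Summable (fun t : ℕ => M.γ ^ t * vtraceTerm M π β cbar ρbar V t s) := by
  have hB1 : ∀ x : S, |vtraceTerm M π β cbar ρbar V 0 x| ≤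
      univ.sup' univ_nonempty (fun x => |vtraceTerm M π β cbar ρbar V 0 x|) :=
    fun x => Finset.le_sup' (fun x => |vtraceTerm M π β cbar ρbar V 0 x|) (Finset.mem_univ x)
  have hB0 : 0 ≤ univ.sup' univ_nonempty (fun x => |vtraceTerm M π β cbar ρbar V 0 x|) :=
    le_trans (abs_nonneg _) (hB1 (Classical.arbitrary S))
  have hbd : ∀ (t : ℕ) (x : S), |vtraceTerm M π β cbar ρbar V t x| ≤
      univ.sup' univ_nonempty (fun x => |vtraceTerm M π β cbar ρbar V 0 x|) := by
    intro t
    induction t with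
    | zero => exact hB1
    | succ n ih =>
      intro x
      show |∑ a, β x a * cw π β cbar x a *
        ∑ s', M.P x a s' * vtraceTerm M π β cbar ρbar V n s'| ≤ _
      exact outer_abs_le hβ x _ (cww_nonneg hπ hβpos hc x)
        (sum_beta_cw_le_one hπ hβ hβpos hcρ x) _ (fun a => inner_abs_le ih x a) hB0
  exact summable_geom_bound M fun t => hbd t s

private lemma key_bound [Nonempty S] (hπ : IsPolicy π) (hβ : IsPolicy β)
    (hβpos : ∀ s a, 0 < β s a) (hc : 0 ≤ cbar) (hcρ : cbar ≤ ρbar)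
    {W : S → ℝ} {K : ℝ} (hK : ∀ x, |W x| ≤ K) (hK0 : 0 ≤ K) :
    ∀ t s, |kfun M π β cbar ρbar W t s - hfun M π β cbar ρbar W (t + 1) s| ≤
      (etaW M π β cbar ρbar (t + 1) s - etaW M π β cbar ρbar (t + 2) s) * K := by
  have hρ : (0:ℝ) ≤ ρbar := le_trans hc hcρ
  have hq1 : ∀ s', etaW M π β cbar ρbar 1 s' ≤ 1 := fun s' => by
    rw [etaW_one_eq]; exact sum_beta_rw_le_one hπ hβ hβpos s'
  intro t
  induction t with
  | zero =>
    intro s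
    have hcoef : ∀ (a : A) (s' : S),
        0 ≤ ρw π β ρbar s a - cw π β cbar s a * etaW M π β cbar ρbar 1 s' := by
      intro a s'
      have h1 : cw π β cbar s a * etaW M π β cbar ρbar 1 s' ≤ cw π β cbar s a * 1 :=
        mul_le_mul_of_nonneg_left (hq1 s') (cww_nonneg hπ hβpos hc s a)
      have h2 : cw π β cbar s a ≤ ρw π β ρbar s a := cw_le_rw hcρ s a
      rw [mul_one] at h1
      linarith
    have inner_id : ∀ a : A, ∑ s', M.P s a s' *
        ((ρw π β ρbar s a - cw π β cbar s a * etaW M π β cbar ρbar 1 s') * W s')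
        = ρw π β ρbar s a * (∑ s', M.P s a s' * W s')
          - cw π β cbar s a * ∑ s', M.P s a s' * (etaW M π β cbar ρbar 1 s' * W s') := by
      intro a
      rw [Finset.mul_sum, Finset.mul_sum, ← Finset.sum_sub_distrib]
      exact Finset.sum_congr rfl fun s' _ => by ring
    have hId : kfun M π β cbar ρbar W 0 s - hfun M π β cbar ρbar W 1 s =
        ∑ a, β s a * ∑ s', M.P s a s' *
          ((ρw π β ρbar s a - cw π β cbar s a * etaW M π β cbar ρbar 1 s') * W s') := by
      show (∑ a, β s a * ρw π β ρbar s a * ∑ s', M.P s a s' * W s') -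
          (∑ a, β s a * cw π β cbar s a *
            ∑ s', M.P s a s' * (etaW M π β cbar ρbar 1 s' * W s')) = _
      rw [← Finset.sum_sub_distrib]
      refine Finset.sum_congr rfl fun a _ => ?_
      rw [inner_id a]
      ring
    rw [hId]
    have habs : |∑ a, β s a * ∑ s', M.P s a s' *
        ((ρw π β ρbar s a - cw π β cbar s a * etaW M π β cbar ρbar 1 s') * W s')| ≤
        ∑ a, β s a * ∑ s', M.P s a s' *
          ((ρw π β ρbar s a - cw π β cbar s a * etaW M π β cbar ρbar 1 s') * K) := by
      refine abs_sum_mul_le (fun a => hβ.1 s a) fun a => ?_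
      refine abs_sum_mul_le (fun s' => M.P_nonneg s a s') fun s' => ?_
      rw [abs_mul, abs_of_nonneg (hcoef a s')]
      exact mul_le_mul_of_nonneg_left (hK s') (hcoef a s')
    refine le_trans habs (le_of_eq ?_)
    have step1 : ∀ a : A, ∑ s', M.P s a s' *
        ((ρw π β ρbar s a - cw π β cbar s a * etaW M π β cbar ρbar 1 s') * K) =
        ρw π β ρbar s a * K - cw π β cbar s a *
          ((∑ s', M.P s a s' * etaW M π β cbar ρbar 1 s') * K) := by
      intro a
      calc ∑ s', M.P s a s' *
          ((ρw π β ρbar s a - cw π β cbar s a * etaW M π β cbar ρbar 1 s') * K)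
          = ∑ s', ((ρw π β ρbar s a * K) * M.P s a s' +
              (-(cw π β cbar s a * K)) * (M.P s a s' * etaW M π β cbar ρbar 1 s')) :=
            Finset.sum_congr rfl fun s' _ => by ring
        _ = (ρw π β ρbar s a * K) * (∑ s', M.P s a s') +
            (-(cw π β cbar s a * K)) * (∑ s', M.P s a s' * etaW M π β cbar ρbar 1 s') := by
            rw [Finset.sum_add_distrib, ← Finset.mul_sum, ← Finset.mul_sum]
        _ = _ := by rw [M.P_sum]; ring
    calc ∑ a, β s a * ∑ s', M.P s a s' *
        ((ρw π β ρbar s a - cw π β cbar s a * etaW M π β cbar ρbar 1 s') * K)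
        = ∑ a, (K * (β s a * ρw π β ρbar s a) +
            (-K) * (β s a * cw π β cbar s a *
              ∑ s', M.P s a s' * etaW M π β cbar ρbar 1 s')) := by
          refine Finset.sum_congr rfl fun a _ => ?_
          rw [step1 a]; ring
      _ = K * (∑ a, β s a * ρw π β ρbar s a) +
          (-K) * ∑ a, β s a * cw π β cbar s a *
            ∑ s', M.P s a s' * etaW M π β cbar ρbar 1 s' := by
          rw [Finset.sum_add_distrib, ← Finset.mul_sum, ← Finset.mul_sum]
      _ = (etaW M π β cbar ρbar (0 + 1) s - etaW M π β cbar ρbar (0 + 2) s) * K := by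
          rw [etaW_add_two_eq 0 s, ← etaW_one_eq s]
          simp only [Nat.zero_add]
          ring
  | succ n ih =>
    intro s
    have hId : kfun M π β cbar ρbar W (n + 1) s - hfun M π β cbar ρbar W (n + 1 + 1) s =
        ∑ a, β s a * cw π β cbar s a * ∑ s', M.P s a s' *
          (kfun M π β cbar ρbar W n s' - hfun M π β cbar ρbar W (n + 1) s') := by
      show (∑ a, β s a * cw π β cbar s a * ∑ s', M.P s a s' * kfun M π β cbar ρbar W n s') -
          (∑ a, β s a * cw π β cbar s a *
            ∑ s', M.P s a s' * hfun M π β cbar ρbar W (n + 1) s') = _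
      rw [← Finset.sum_sub_distrib]
      refine Finset.sum_congr rfl fun a _ => ?_
      rw [← mul_sub, ← Finset.sum_sub_distrib]
      congr 1
      exact Finset.sum_congr rfl fun s' _ => by rw [mul_sub]
    rw [hId]
    have habs : |∑ a, β s a * cw π β cbar s a * ∑ s', M.P s a s' *
        (kfun M π β cbar ρbar W n s' - hfun M π β cbar ρbar W (n + 1) s')| ≤
        ∑ a, β s a * cw π β cbar s a * ∑ s', M.P s a s' *
          ((etaW M π β cbar ρbar (n + 1) s' - etaW M π β cbar ρbar (n + 2) s') * K) := by
      refine abs_sum_mul_le (fun a => mul_nonneg (hβ.1 s a) (cww_nonneg hπ hβpos hc s a))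
        fun a => ?_
      exact abs_sum_mul_le (fun s' => M.P_nonneg s a s') fun s' => ih s'
    refine le_trans habs ?_
    have heq : ∑ a, β s a * cw π β cbar s a * ∑ s', M.P s a s' *
        ((etaW M π β cbar ρbar (n + 1) s' - etaW M π β cbar ρbar (n + 2) s') * K) =
        (etaW M π β cbar ρbar (n + 2) s - etaW M π β cbar ρbar (n + 1 + 2) s) * K := by
      rw [etaW_add_two_eq n s, etaW_add_two_eq (n + 1) s,
        show n + 1 + 1 = n + 2 from rfl]
      calc ∑ a, β s a * cw π β cbar s a * ∑ s', M.P s a s' *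
          ((etaW M π β cbar ρbar (n + 1) s' - etaW M π β cbar ρbar (n + 2) s') * K)
          = ∑ a, (K * (β s a * cw π β cbar s a *
              ∑ s', M.P s a s' * etaW M π β cbar ρbar (n + 1) s') +
              (-K) * (β s a * cw π β cbar s a *
              ∑ s', M.P s a s' * etaW M π β cbar ρbar (n + 2) s')) := by
            refine Finset.sum_congr rfl fun a _ => ?_
            have hsplit : ∑ s', M.P s a s' *
                ((etaW M π β cbar ρbar (n + 1) s' - etaW M π β cbar ρbar (n + 2) s') * K) =
                K * (∑ s', M.P s a s' * etaW M π β cbar ρbar (n + 1) s') +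
                (-K) * (∑ s', M.P s a s' * etaW M π β cbar ρbar (n + 2) s') := by
              rw [Finset.mul_sum, Finset.mul_sum, ← Finset.sum_add_distrib]
              exact Finset.sum_congr rfl fun s' _ => by ring
            rw [hsplit]; ring
        _ = K * (∑ a, β s a * cw π β cbar s a *
              ∑ s', M.P s a s' * etaW M π β cbar ρbar (n + 1) s') +
            (-K) * ∑ a, β s a * cw π β cbar s a *
              ∑ s', M.P s a s' * etaW M π β cbar ρbar (n + 2) s' := by
            rw [Finset.sum_add_distrib, ← Finset.mul_sum, ← Finset.mul_sum]
        _ = _ := by ring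
    exact le_of_eq heq

end VtraceAux2

/-- V-trace is an η-contraction in sup-norm, with `η ≤ 1 − (1−γ)α < 1`. -/
theorem vtrace_contraction [Nonempty S] (M : FinMDP S A) (π β : S → A → ℝ)
    (hπ : IsPolicy π) (hβ : IsPolicy β) (hβpos : ∀ s a, 0 < β s a)
    (hγ : 0 < M.γ) (cbar ρbar : ℝ) (hc : 0 ≤ cbar) (hcρ : cbar ≤ ρbar)
    (α : ℝ) (hα0 : 0 < α) (hα1 : α ≤ 1)
    (hαbd : ∀ s, α ≤ ∑ a, β s a * ρw π β ρbar s a) :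
    (∀ V₁ V₂ : S → ℝ, ∀ s,
        |vtraceOp M π β cbar ρbar V₁ s - vtraceOp M π β cbar ρbar V₂ s| ≤
          (univ.sup' univ_nonempty fun s' =>
              M.γ⁻¹ - (M.γ⁻¹ - 1) * ∑' t : ℕ, M.γ ^ t * etaW M π β cbar ρbar t s') *
            univ.sup' univ_nonempty fun s' => |V₁ s' - V₂ s'|) ∧
    (univ.sup' univ_nonempty fun s' =>
        M.γ⁻¹ - (M.γ⁻¹ - 1) * ∑' t : ℕ, M.γ ^ t * etaW M π β cbar ρbar t s')
      ≤ 1 - (1 - M.γ) * α ∧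
    1 - (1 - M.γ) * α < 1 := by
  classical
  have hρ0 : (0:ℝ) ≤ ρbar := le_trans hc hcρ
  have hγ0 : (0:ℝ) ≤ M.γ := M.γ_nonneg
  have hγne : M.γ ≠ 0 := ne_of_gt hγ
  have hetaNN : ∀ t s, 0 ≤ etaW M π β cbar ρbar t s := etaW_nonneg hπ hβ hβpos hc hcρ
  have hetaLE : ∀ t s, etaW M π β cbar ρbar t s ≤ 1 := etaW_le_one hπ hβ hβpos hc hcρ
  have hEsum : ∀ s, Summable (fun t : ℕ => M.γ ^ t * etaW M π β cbar ρbar t s) := by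
    intro s
    refine summable_geom_bound M (b := 1) fun t => ?_
    rw [abs_of_nonneg (hetaNN t s)]; exact hetaLE t s
  have hEsum' : ∀ s, Summable (fun t : ℕ => M.γ ^ t * etaW M π β cbar ρbar (t + 1) s) := by
    intro s
    refine summable_geom_bound M (b := 1) fun t => ?_
    rw [abs_of_nonneg (hetaNN (t + 1) s)]; exact hetaLE (t + 1) s
  have hηid : ∀ s, ∑' t : ℕ, M.γ ^ t *
      (etaW M π β cbar ρbar t s - etaW M π β cbar ρbar (t + 1) s) =
      M.γ⁻¹ - (M.γ⁻¹ - 1) * ∑' t : ℕ, M.γ ^ t * etaW M π β cbar ρbar t s := by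
    intro s
    have split : ∑' t : ℕ, M.γ ^ t *
        (etaW M π β cbar ρbar t s - etaW M π β cbar ρbar (t + 1) s)
        = (∑' t : ℕ, M.γ ^ t * etaW M π β cbar ρbar t s) -
          ∑' t : ℕ, M.γ ^ t * etaW M π β cbar ρbar (t + 1) s := by
      rw [← Summable.tsum_sub (hEsum s) (hEsum' s)]
      exact tsum_congr fun t => by ring
    have hshift : ∑' t : ℕ, M.γ ^ t * etaW M π β cbar ρbar (t + 1) s
        = M.γ⁻¹ * ((∑' t : ℕ, M.γ ^ t * etaW M π β cbar ρbar t s) - 1) := by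
      have h1 : ∀ t : ℕ, M.γ ^ t * etaW M π β cbar ρbar (t + 1) s =
          M.γ⁻¹ * (M.γ ^ (t + 1) * etaW M π β cbar ρbar (t + 1) s) := by
        intro t
        rw [pow_succ]
        field_simp
      rw [tsum_congr h1, tsum_mul_left]
      congr 1
      have h2 := Summable.tsum_eq_zero_add (hEsum s)
      rw [pow_zero, one_mul, etaW_zero_eq] at h2
      linarith
    rw [split, hshift]
    ring
  refine ⟨?_, ?_, ?_⟩
  · -- contraction bound
    intro V₁ V₂ s
    set K : ℝ := univ.sup' univ_nonempty (fun s' => |V₁ s' - V₂ s'|) with hKdef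
    have hK : ∀ x : S, |V₁ x - V₂ x| ≤ K :=
      fun x => Finset.le_sup' (fun s' => |V₁ s' - V₂ s'|) (Finset.mem_univ x)
    have hK0 : 0 ≤ K := le_trans (abs_nonneg _) (hK (Classical.arbitrary S))
    set Wf : S → ℝ := fun x => V₁ x - V₂ x with hWf
    have hWx : ∀ x, Wf x = V₁ x - V₂ x := fun x => rfl
    have hK' : ∀ x, |Wf x| ≤ K := fun x => hK x
    have hkB : ∀ t x, |kfun M π β cbar ρbar Wf t x| ≤ K :=
      kfun_abs_le hπ hβ hβpos hc hcρ hK' hK0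
    have hhB : ∀ t x, |hfun M π β cbar ρbar Wf t x| ≤ K :=
      hfun_abs_le hπ hβ hβpos hc hcρ hK' hK0
    have hδsum : ∀ V : S → ℝ,
        Summable (fun t : ℕ => M.γ ^ t * vtraceTerm M π β cbar ρbar V t s) :=
      fun V => summable_vtrace hπ hβ hβpos hc hcρ V s
    have hsum1 : Summable (fun t : ℕ => M.γ ^ t * (M.γ * kfun M π β cbar ρbar Wf t s)) := by
      refine summable_geom_bound M (b := M.γ * K) fun t => ?_
      rw [abs_mul, abs_of_nonneg hγ0]
      exact mul_le_mul_of_nonneg_left (hkB t s) hγ0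
    have hsum2 : Summable (fun t : ℕ => M.γ ^ t * hfun M π β cbar ρbar Wf t s) :=
      summable_geom_bound M fun t => hhB t s
    have hsum3 : Summable (fun t : ℕ => M.γ ^ t * (M.γ * hfun M π β cbar ρbar Wf (t + 1) s)) := by
      refine summable_geom_bound M (b := M.γ * K) fun t => ?_
      rw [abs_mul, abs_of_nonneg hγ0]
      exact mul_le_mul_of_nonneg_left (hhB (t + 1) s) hγ0
    have e0 : (∑' t : ℕ, M.γ ^ t * vtraceTerm M π β cbar ρbar V₁ t s) -
        ∑' t : ℕ, M.γ ^ t * vtraceTerm M π β cbar ρbar V₂ t s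
        = ∑' t : ℕ, M.γ ^ t *
            (M.γ * kfun M π β cbar ρbar Wf t s - hfun M π β cbar ρbar Wf t s) := by
      rw [← Summable.tsum_sub (hδsum V₁) (hδsum V₂)]
      exact tsum_congr fun t => by rw [← mul_sub, vtraceTerm_sub V₁ V₂ Wf hWx t s]
    have e1 : vtraceOp M π β cbar ρbar V₁ s - vtraceOp M π β cbar ρbar V₂ s
        = Wf s + ∑' t : ℕ, M.γ ^ t *
            (M.γ * kfun M π β cbar ρbar Wf t s - hfun M π β cbar ρbar Wf t s) := by
      show (V₁ s + ∑' t : ℕ, M.γ ^ t * vtraceTerm M π β cbar ρbar V₁ t s) -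
        (V₂ s + ∑' t : ℕ, M.γ ^ t * vtraceTerm M π β cbar ρbar V₂ t s) = _
      rw [← e0, hWx]
      ring
    have e2 : ∑' t : ℕ, M.γ ^ t *
        (M.γ * kfun M π β cbar ρbar Wf t s - hfun M π β cbar ρbar Wf t s)
        = (∑' t : ℕ, M.γ ^ t * (M.γ * kfun M π β cbar ρbar Wf t s)) -
          ∑' t : ℕ, M.γ ^ t * hfun M π β cbar ρbar Wf t s := by
      rw [← Summable.tsum_sub hsum1 hsum2]
      exact tsum_congr fun t => by ring
    have e3 : ∑' t : ℕ, M.γ ^ t * hfun M π β cbar ρbar Wf t s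
        = hfun M π β cbar ρbar Wf 0 s +
          ∑' t : ℕ, M.γ ^ t * (M.γ * hfun M π β cbar ρbar Wf (t + 1) s) := by
      have h2 := Summable.tsum_eq_zero_add hsum2
      rw [pow_zero, one_mul] at h2
      rw [h2]
      congr 1
      exact tsum_congr fun t => by rw [pow_succ]; ring
    have e4 : (∑' t : ℕ, M.γ ^ t * (M.γ * kfun M π β cbar ρbar Wf t s)) -
        ∑' t : ℕ, M.γ ^ t * (M.γ * hfun M π β cbar ρbar Wf (t + 1) s)
        = ∑' t : ℕ, M.γ ^ t *
            (M.γ * (kfun M π β cbar ρbar Wf t s - hfun M π β cbar ρbar Wf (t + 1) s)) := by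
      rw [← Summable.tsum_sub hsum1 hsum3]
      exact tsum_congr fun t => by ring
    have hdiff : vtraceOp M π β cbar ρbar V₁ s - vtraceOp M π β cbar ρbar V₂ s
        = (Wf s - hfun M π β cbar ρbar Wf 0 s) +
          ∑' t : ℕ, M.γ ^ t *
            (M.γ * (kfun M π β cbar ρbar Wf t s - hfun M π β cbar ρbar Wf (t + 1) s)) := by
      rw [e1, e2, e3, ← e4]
      ring
    have hbd1 : |Wf s - hfun M π β cbar ρbar Wf 0 s| ≤
        (etaW M π β cbar ρbar 0 s - etaW M π β cbar ρbar 1 s) * K := by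
      have hform : Wf s - hfun M π β cbar ρbar Wf 0 s =
          (1 - etaW M π β cbar ρbar 1 s) * Wf s := by
        show Wf s - (∑ a, β s a * ρw π β ρbar s a) * Wf s = _
        rw [etaW_one_eq]
        ring
      rw [hform, abs_mul, abs_of_nonneg (by linarith [hetaLE 1 s] : (0:ℝ) ≤ 1 - etaW M π β cbar ρbar 1 s),
        etaW_zero_eq]
      exact mul_le_mul_of_nonneg_left (hK' s) (by linarith [hetaLE 1 s])
    have hkey := key_bound (M := M) hπ hβ hβpos hc hcρ hK' hK0
    have hg : Summable (fun t : ℕ => M.γ ^ t *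
        (M.γ * ((etaW M π β cbar ρbar (t + 1) s - etaW M π β cbar ρbar (t + 2) s) * K))) := by
      refine summable_geom_bound M (b := M.γ * K) fun t => ?_
      have h1 : 0 ≤ etaW M π β cbar ρbar (t + 1) s - etaW M π β cbar ρbar (t + 2) s := by
        have := etaW_succ_le (M := M) hπ hβ hβpos hc hcρ (t + 1) s
        rw [show t + 1 + 1 = t + 2 from rfl] at this
        linarith
      rw [abs_of_nonneg (mul_nonneg hγ0 (mul_nonneg h1 hK0))]
      have h2 : (etaW M π β cbar ρbar (t + 1) s - etaW M π β cbar ρbar (t + 2) s) * K ≤ 1 * K := by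
        refine mul_le_mul_of_nonneg_right ?_ hK0
        have := hetaLE (t + 1) s
        have := hetaNN (t + 2) s
        linarith
      rw [one_mul] at h2
      exact mul_le_mul_of_nonneg_left h2 hγ0
    have hf : Summable (fun t : ℕ => M.γ ^ t *
        (M.γ * (kfun M π β cbar ρbar Wf t s - hfun M π β cbar ρbar Wf (t + 1) s))) := by
      refine summable_geom_bound M (b := M.γ * (K + K)) fun t => ?_
      rw [abs_mul, abs_of_nonneg hγ0]
      refine mul_le_mul_of_nonneg_left ?_ hγ0
      calc |kfun M π β cbar ρbar Wf t s - hfun M π β cbar ρbar Wf (t + 1) s|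
          ≤ |kfun M π β cbar ρbar Wf t s| + |hfun M π β cbar ρbar Wf (t + 1) s| :=
            abs_sub _ _
        _ ≤ K + K := add_le_add (hkB t s) (hhB (t + 1) s)
    have hbd2 : |∑' t : ℕ, M.γ ^ t *
        (M.γ * (kfun M π β cbar ρbar Wf t s - hfun M π β cbar ρbar Wf (t + 1) s))| ≤
        ∑' t : ℕ, M.γ ^ t *
          (M.γ * ((etaW M π β cbar ρbar (t + 1) s - etaW M π β cbar ρbar (t + 2) s) * K)) := by
      refine abs_le.2 ⟨?_, ?_⟩
      · rw [← tsum_neg]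
        refine Summable.tsum_le_tsum (fun t => ?_) hg.neg hf
        have h3 := (abs_le.1 (hkey t s)).1
        calc -(M.γ ^ t * (M.γ *
            ((etaW M π β cbar ρbar (t + 1) s - etaW M π β cbar ρbar (t + 2) s) * K)))
            = M.γ ^ t * (M.γ *
              (-((etaW M π β cbar ρbar (t + 1) s - etaW M π β cbar ρbar (t + 2) s) * K))) := by
              ring
          _ ≤ M.γ ^ t * (M.γ *
              (kfun M π β cbar ρbar Wf t s - hfun M π β cbar ρbar Wf (t + 1) s)) := by
              refine mul_le_mul_of_nonneg_left (mul_le_mul_of_nonneg_left h3 hγ0)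
                (pow_nonneg hγ0 t)
      · refine Summable.tsum_le_tsum (fun t => ?_) hf hg
        refine mul_le_mul_of_nonneg_left (mul_le_mul_of_nonneg_left ?_ hγ0) (pow_nonneg hγ0 t)
        exact le_trans (le_abs_self _) (hkey t s)
    have hu : Summable (fun t : ℕ => M.γ ^ t *
        ((etaW M π β cbar ρbar t s - etaW M π β cbar ρbar (t + 1) s) * K)) := by
      refine summable_geom_bound M (b := K) fun t => ?_
      have h1 : 0 ≤ etaW M π β cbar ρbar t s - etaW M π β cbar ρbar (t + 1) s := by
        have := etaW_succ_le (M := M) hπ hβ hβpos hc hcρ t s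
        linarith
      rw [abs_of_nonneg (mul_nonneg h1 hK0)]
      have h2 : etaW M π β cbar ρbar t s - etaW M π β cbar ρbar (t + 1) s ≤ 1 := by
        have := hetaLE t s
        have := hetaNN (t + 1) s
        linarith
      calc (etaW M π β cbar ρbar t s - etaW M π β cbar ρbar (t + 1) s) * K ≤ 1 * K :=
            mul_le_mul_of_nonneg_right h2 hK0
        _ = K := one_mul K
    have e5 : (etaW M π β cbar ρbar 0 s - etaW M π β cbar ρbar 1 s) * K +
        ∑' t : ℕ, M.γ ^ t *
          (M.γ * ((etaW M π β cbar ρbar (t + 1) s - etaW M π β cbar ρbar (t + 2) s) * K))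
        = (∑' t : ℕ, M.γ ^ t *
            (etaW M π β cbar ρbar t s - etaW M π β cbar ρbar (t + 1) s)) * K := by
      have h0 := Summable.tsum_eq_zero_add hu
      rw [pow_zero, one_mul] at h0
      have hsh : ∑' t : ℕ, M.γ ^ (t + 1) *
          ((etaW M π β cbar ρbar (t + 1) s - etaW M π β cbar ρbar (t + 1 + 1) s) * K)
          = ∑' t : ℕ, M.γ ^ t *
            (M.γ * ((etaW M π β cbar ρbar (t + 1) s - etaW M π β cbar ρbar (t + 2) s) * K)) := by
        refine tsum_congr fun t => ?_
        rw [show t + 1 + 1 = t + 2 from rfl, pow_succ]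
        ring
      have hmr : ∑' t : ℕ, M.γ ^ t *
          ((etaW M π β cbar ρbar t s - etaW M π β cbar ρbar (t + 1) s) * K)
          = (∑' t : ℕ, M.γ ^ t *
            (etaW M π β cbar ρbar t s - etaW M π β cbar ρbar (t + 1) s)) * K := by
        rw [← tsum_mul_right]
        exact tsum_congr fun t => by ring
      rw [← hmr, h0, ← hsh]
    calc |vtraceOp M π β cbar ρbar V₁ s - vtraceOp M π β cbar ρbar V₂ s|
        ≤ |Wf s - hfun M π β cbar ρbar Wf 0 s| +
          |∑' t : ℕ, M.γ ^ t *
            (M.γ * (kfun M π β cbar ρbar Wf t s - hfun M π β cbar ρbar Wf (t + 1) s))| := by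
          rw [hdiff]; exact abs_add_le _ _
      _ ≤ (etaW M π β cbar ρbar 0 s - etaW M π β cbar ρbar 1 s) * K +
          ∑' t : ℕ, M.γ ^ t *
            (M.γ * ((etaW M π β cbar ρbar (t + 1) s - etaW M π β cbar ρbar (t + 2) s) * K)) :=
          add_le_add hbd1 hbd2
      _ = (∑' t : ℕ, M.γ ^ t *
            (etaW M π β cbar ρbar t s - etaW M π β cbar ρbar (t + 1) s)) * K := e5
      _ = (M.γ⁻¹ - (M.γ⁻¹ - 1) * ∑' t : ℕ, M.γ ^ t * etaW M π β cbar ρbar t s) * K := by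
          rw [hηid s]
      _ ≤ (univ.sup' univ_nonempty fun s' =>
            M.γ⁻¹ - (M.γ⁻¹ - 1) * ∑' t : ℕ, M.γ ^ t * etaW M π β cbar ρbar t s') * K := by
          refine mul_le_mul_of_nonneg_right ?_ hK0
          exact Finset.le_sup' (fun s' =>
            M.γ⁻¹ - (M.γ⁻¹ - 1) * ∑' t : ℕ, M.γ ^ t * etaW M π β cbar ρbar t s')
            (Finset.mem_univ s)
  · -- sup' bound
    refine Finset.sup'_le _ _ fun s _ => ?_
    have hEge : 1 + M.γ * α ≤ ∑' t : ℕ, M.γ ^ t * etaW M π β cbar ρbar t s := by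
      have hpart := Summable.sum_le_tsum (Finset.range 2)
        (fun t _ => mul_nonneg (pow_nonneg hγ0 t) (hetaNN t s)) (hEsum s)
      have hval : ∑ t ∈ Finset.range 2, M.γ ^ t * etaW M π β cbar ρbar t s
          = 1 + M.γ * etaW M π β cbar ρbar 1 s := by
        rw [Finset.sum_range_succ, Finset.sum_range_one, pow_zero, pow_one, one_mul,
          etaW_zero_eq]
      rw [hval] at hpart
      have hα' : α ≤ etaW M π β cbar ρbar 1 s := by
        rw [etaW_one_eq]; exact hαbd s
      have := mul_le_mul_of_nonneg_left hα' hγ0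
      linarith
    have hγinv1 : 1 ≤ M.γ⁻¹ := (one_le_inv₀ hγ).2 M.γ_lt_one.le
    have hexp : M.γ⁻¹ - (M.γ⁻¹ - 1) * (1 + M.γ * α) = 1 - (1 - M.γ) * α := by
      field_simp
      ring
    have := mul_le_mul_of_nonneg_left hEge (by linarith : (0:ℝ) ≤ M.γ⁻¹ - 1)
    linarith
  · have h1 : (0:ℝ) < 1 - M.γ := by linarith [M.γ_lt_one]
    have := mul_pos h1 hα0
    linarith
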